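/- Let G = A ∗_C B be an amalgamated free product, formed from injective group homomorphisms i : C → A and j : C → B. If a ∈ A is such that the image of a in G is conjugate in G to an element of the image of C in G, then a is conjugate in A to an element of the image i(C): there exist a' ∈ A and c ∈ C with a = a' · i(c) · a'⁻¹. -/

import Mathlib

open Monoid Function Monoid.PushoutI Monoid.CoprodI Monoid.PushoutI.NormalWord

namespace Stmt15

variable {ι : Type} {H : Type} {K : ι → Type} [Group H] [∀ i, Group (K i)]
  {φ : ∀ i, H →* K i}

/-- product of a list of letters in the pushout -/
def lprod (φ : ∀ i, H →* K i) (L : List (Σ i, K i)) : PushoutI φ :=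
  (L.map fun l => of (φ := φ) l.1 l.2).prod

theorem prodW (w : Word K) : PushoutI.ofCoprodI (φ := φ) w.prod = lprod φ w.toList := by
  rw [Word.prod, lprod, map_list_prod, List.map_map]
  congr 1

@[simp] theorem lprod_nil : lprod φ [] = 1 := rfl

@[simp] theorem lprod_append (L₁ L₂ : List (Σ i, K i)) :
    lprod φ (L₁ ++ L₂) = lprod φ L₁ * lprod φ L₂ := by
  simp [lprod]

@[simp] theorem lprod_cons (x : Σ i, K i) (L : List (Σ i, K i)) :
    lprod φ (x :: L) = of (φ := φ) x.1 x.2 * lprod φ L := by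
  simp [lprod]

theorem lprod_inv_reverse (L : List (Σ i, K i)) :
    lprod φ ((L.map fun l => (⟨l.1, l.2⁻¹⟩ : Σ i, K i)).reverse) = (lprod φ L)⁻¹ := by
  induction L with
  | nil => simp
  | cons x L ih => simp [ih, mul_assoc]

theorem set_not_mem_range (d : Transversal φ) {i : ι} {g : K i}
    (hg : g ∈ d.set i) (hg1 : g ≠ 1) : g ∉ (φ i).range := by
  intro hr
  have h2 := ((d.compl i).equiv_snd_eq_self_iff_mem (Subgroup.one_mem _)).2 hg
  have h1 := ((d.compl i).coe_equiv_snd_eq_one_iff_mem (d.one_mem i)).2 hr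
  exact hg1 (h2 ▸ h1)

theorem exists_decomp (hφ : ∀ i, Injective (φ i)) (k : PushoutI φ) :
    ∃ (h : H) (w : Word K), PushoutI.Reduced φ w ∧
      k = base φ h * PushoutI.ofCoprodI w.prod := by
  classical
  obtain ⟨d⟩ := transversal_nonempty φ hφ
  refine ⟨(NormalWord.equiv (d := d) k).head, (NormalWord.equiv (d := d) k).toWord, ?_, ?_⟩
  · intro g hg
    exact set_not_mem_range d
      ((NormalWord.equiv (d := d) k).normalized g.1 g.2 hg)
      ((NormalWord.equiv (d := d) k).toWord.ne_one g hg)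
  · have hk : ((NormalWord.equiv (d := d) k) : NormalWord d).prod = k :=
      NormalWord.equiv.symm_apply_apply k
    exact hk.symm

theorem length_le_one (hφ : ∀ i, Injective (φ i)) {w : Word K}
    (hw : PushoutI.Reduced φ w) {i₀ : ι} {a : K i₀}
    (heq : PushoutI.ofCoprodI w.prod = of (φ := φ) i₀ a) : w.toList.length ≤ 1 := by
  classical
  obtain ⟨d⟩ := transversal_nonempty φ hφ
  by_cases ha : a ∈ (φ i₀).range
  · obtain ⟨c₀, rfl⟩ := ha
    have hempty : w = .empty := hw.eq_empty_of_mem_range hφ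
      (heq ▸ ⟨c₀, (of_apply_eq_base φ i₀ c₀).symm⟩)
    subst hempty
    simp [Word.empty]
  · have ha1 : a ≠ 1 := fun h => ha (h ▸ one_mem _)
    let w₁ : Word K := ⟨[⟨i₀, a⟩], by simpa using ha1, List.isChain_singleton _⟩
    have hw₁ : PushoutI.Reduced φ w₁ := by
      intro g hg
      rw [List.mem_singleton] at hg
      subst hg
      exact ha
    obtain ⟨v, hv, hvm⟩ := hw.exists_normalWord_prod_eq d
    obtain ⟨v₁, hv₁, hv₁m⟩ := hw₁.exists_normalWord_prod_eq d
    have hvv : v = v₁ := NormalWord.prod_injective (by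
      rw [hv, hv₁, heq]
      show _ = PushoutI.ofCoprodI (Word.prod w₁)
      simp [w₁, Word.prod, ofCoprodI_of])
    have h1 : w.toList.length = v.toList.length := by
      simpa using (congrArg List.length hvm).symm
    have h2 : v₁.toList.length = w₁.toList.length := by
      simpa using congrArg List.length hv₁m
    rw [h1, hvv, h2]
    simp [w₁]


theorem key (hφ : ∀ i, Injective (φ i)) (i₀ : ι) (L : List (Σ i, K i)) :
    (∀ l ∈ L, l.2 ∉ (φ l.1).range) → L.Chain' (fun l l' => l.1 ≠ l'.1) →
    ∀ (a : K i₀) (c : H),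
      of (φ := φ) i₀ a = lprod φ L * base φ c * (lprod φ L)⁻¹ →
      ∃ (a' : K i₀) (c' : H), a = a' * φ i₀ c' * a'⁻¹ := by
  induction L using List.reverseRecOn with
  | nil =>
    intro _ _ a c heq
    simp only [lprod_nil, one_mul, inv_one, mul_one] at heq
    rw [← of_apply_eq_base φ i₀ c] at heq
    exact ⟨1, c, by simpa using of_injective hφ i₀ heq⟩
  | append_singleton L₀ x ih =>
    intro hred hchain a c heq
    have hred₀ : ∀ l ∈ L₀, l.2 ∉ (φ l.1).range := fun l hl => hred l (List.mem_append_left _ hl)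
    obtain ⟨hc₀, -, hcj⟩ := List.isChain_append.mp hchain
    set xc : K x.1 := x.2 * φ x.1 c * x.2⁻¹ with hxc
    have hofxc : of (φ := φ) x.1 xc = of (φ := φ) x.1 x.2 * base φ c * (of (φ := φ) x.1 x.2)⁻¹ := by
      rw [← of_apply_eq_base φ x.1 c]
      simp [hxc]
    have heq2 : of (φ := φ) i₀ a = lprod φ L₀ * of (φ := φ) x.1 xc * (lprod φ L₀)⁻¹ := by
      rw [hofxc, heq, lprod_append, lprod_cons]
      simp [lprod, mul_assoc]
    by_cases hmem : xc ∈ (φ x.1).range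
    · obtain ⟨c₁, hc₁⟩ := hmem
      refine ih hred₀ hc₀ a c₁ ?_
      rw [heq2, ← hc₁, of_apply_eq_base]
    · -- the big reduced word forces L₀ = []
      set f : (Σ i, K i) → (Σ i, K i) := fun l => ⟨l.1, l.2⁻¹⟩ with hf
      set V : List (Σ i, K i) := L₀ ++ ⟨x.1, xc⟩ :: (L₀.map f).reverse with hV
      have hVred : ∀ l ∈ V, l.2 ∉ (φ l.1).range := by
        intro l hl
        rw [hV] at hl
        rcases List.mem_append.mp hl with hl | hl
        · exact hred₀ l hl
        · rcases List.mem_cons.mp hl with rfl | hl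
          · exact hmem
          · obtain ⟨l', hl', rfl⟩ := List.mem_map.mp (List.mem_reverse.mp hl)
            simpa [hf, f] using fun hr => hred₀ l' hl' ((inv_mem_iff (x := l'.2)).mp hr)
      have hVchain : V.Chain' (fun l l' => l.1 ≠ l'.1) := by
        rw [hV, List.Chain', List.isChain_append]
        refine ⟨hc₀, ?_, ?_⟩
        · rw [List.isChain_cons]
          constructor
          · intro y hy
            rw [List.head?_reverse, List.getLast?_map] at hy
            obtain ⟨l', hl', rfl⟩ := Option.map_eq_some_iff.mp hy
            exact (hcj l' hl' x (by simp)).symm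
          · rw [List.isChain_reverse, List.isChain_map]
            exact hc₀.imp fun a b h => by simpa [hf, flip] using fun hh => h hh.symm
        · intro y hy z hz
          rw [List.head?_cons, Option.mem_some_iff] at hz
          subst hz
          exact hcj y hy x (by simp)
      have hVprod : lprod φ V = of (φ := φ) i₀ a := by
        rw [hV, lprod_append, lprod_cons, hf, lprod_inv_reverse, heq2]
        simp [mul_assoc]
      let wV : Word K := ⟨V, fun l hl h1 => hVred l hl (h1 ▸ one_mem _), hVchain⟩
      have hwVred : PushoutI.Reduced φ wV := fun g hg => hVred g hg
      have hlen : V.length ≤ 1 := by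
        have hp : PushoutI.ofCoprodI wV.prod = of (φ := φ) i₀ a := by
          rw [prodW]; exact hVprod
        have := length_le_one hφ hwVred hp
        simpa [wV] using this
      have hL₀ : L₀ = [] := by
        rw [hV] at hlen
        simp only [List.length_append, List.length_cons, List.length_reverse,
          List.length_map] at hlen
        exact List.length_eq_zero_iff.mp (by omega)
      subst hL₀
      simp only [lprod_nil, one_mul, inv_one, mul_one, List.nil_append] at heq2
      obtain ⟨ix, gx⟩ := x
      by_cases hio : ix = i₀
      · subst hio
        exact ⟨gx, c, by simpa [hxc] using of_injective hφ ix heq2⟩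
      · exfalso
        have hxmem : of (φ := φ) ix xc ∈ (base φ).range := by
          rw [← inf_of_range_eq_base_range hφ hio]
          exact ⟨⟨xc, rfl⟩, ⟨a, heq2⟩⟩
        obtain ⟨c₂, hc₂⟩ := hxmem
        exact hmem ⟨c₂, of_injective hφ ix (by rw [of_apply_eq_base, hc₂])⟩


theorem conj_base (hφ : ∀ i, Injective (φ i)) {i₀ : ι} {a : K i₀} {k : PushoutI φ} {c : H}
    (h : of (φ := φ) i₀ a = k * base φ c * k⁻¹) :
    ∃ (a' : K i₀) (c' : H), a = a' * φ i₀ c' * a'⁻¹ := by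
  obtain ⟨h₀, w, hwred, rfl⟩ := exists_decomp hφ k
  rw [prodW] at h
  set M := lprod φ w.toList with hM
  set a₁ : K i₀ := (φ i₀ h₀)⁻¹ * a * φ i₀ h₀ with ha₁
  have h₁ : of (φ := φ) i₀ a₁ = M * base φ c * M⁻¹ := by
    have : of (φ := φ) i₀ a₁ = (base φ h₀)⁻¹ * of (φ := φ) i₀ a * base φ h₀ := by
      rw [ha₁, ← of_apply_eq_base φ i₀ h₀]
      simp [mul_assoc]
    rw [this, h]
    group
  obtain ⟨a', c', h2⟩ := key hφ i₀ w.toList hwred w.chain_ne a₁ c h₁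
  refine ⟨φ i₀ h₀ * a', c', ?_⟩
  have : a = φ i₀ h₀ * a₁ * (φ i₀ h₀)⁻¹ := by rw [ha₁]; group
  rw [this, h2]
  group

end Stmt15

def Stmt15.Fam (A B : Type) : Bool → Type
  | true => A
  | false => B

instance Stmt15.famGroup {A B : Type} [Group A] [Group B] : ∀ b, Group (Stmt15.Fam A B b)
  | true => ‹Group A›
  | false => ‹Group B›

def Stmt15.famHom {A B C : Type} [Group A] [Group B] [Group C] (i : C →* A) (j : C →* B) :
    ∀ b, C →* Stmt15.Fam A B b
  | true => i
  | false => j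

/-- Let `G = A ∗_C B` be the amalgamated free product of injective homomorphisms
`i : C → A` and `j : C → B`; this is expressed by saying that `G`, together with
homomorphisms `iA : A → G` and `iB : B → G` satisfying `iA ∘ i = iB ∘ j`, is the pushout
of `i` and `j` in the category of groups.  If the image in `G` of an element `a ∈ A` is
conjugate in `G` to an element of the image of `C`, then `a` is conjugate in `A` to an
element of `i(C)`. -/
theorem stmt_15 {A B C G : Type} [Group A] [Group B] [Group C] [Group G]
    (i : C →* A) (j : C →* B) (hi : Function.Injective i) (hj : Function.Injective j)
    (iA : A →* G) (iB : B →* G) (hcomm : iA.comp i = iB.comp j)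
    (huniv : ∀ (H : Type) [Group H] (f : A →* H) (g : B →* H),
      f.comp i = g.comp j → ∃! h : G →* H, h.comp iA = f ∧ h.comp iB = g)
    (a : A) (c : C) (k : G) (hconj : iA a = k * iA (i c) * k⁻¹) :
    ∃ (a' : A) (c' : C), a = a' * i c' * a'⁻¹ := by
  have hphi : ∀ b, Function.Injective (Stmt15.famHom i j b) := by
    intro b
    cases b
    · exact hj
    · exact hi
  obtain ⟨h, ⟨h1, h2⟩, -⟩ := huniv (PushoutI (Stmt15.famHom i j))
    (of (φ := Stmt15.famHom i j) true) (of (φ := Stmt15.famHom i j) false)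
    (show (of (φ := Stmt15.famHom i j) true).comp (Stmt15.famHom i j true) =
        (of (φ := Stmt15.famHom i j) false).comp (Stmt15.famHom i j false) by
      rw [of_comp_eq_base, of_comp_eq_base])
  have e1 : h (iA a) = of (φ := Stmt15.famHom i j) true a := DFunLike.congr_fun h1 a
  have e2 : h (iA (i c)) = base (Stmt15.famHom i j) c := by
    have h3 : h (iA (i c)) = of (φ := Stmt15.famHom i j) true (i c) :=
      DFunLike.congr_fun h1 (i c)
    rw [h3]
    exact of_apply_eq_base (Stmt15.famHom i j) true c
  have hconj' : of (φ := Stmt15.famHom i j) true a =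
      h k * base (Stmt15.famHom i j) c * (h k)⁻¹ := by
    rw [← e1, ← e2, hconj]
    simp [map_mul]
  obtain ⟨a', c', hac⟩ := Stmt15.conj_base hphi hconj'
  exact ⟨a', c', hac⟩
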